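/- If s_n > 0 satisfies lim s_{n+1}/s_n = +∞, then lim s_n^{1/n} = +∞; and if lim sup s_n s_{n+2}/s_{n+1}^2 < ∞, then the sequence t_n = (s_{n+1}/s_n)^{1/n} is bounded. -/

import Mathlib

open Filter Topology

private lemma geom_upper (r : ℕ → ℝ) (C : ℝ) (hC : 0 < C) (N : ℕ)
    (h : ∀ n, N ≤ n → r (n + 1) ≤ C * r n) :
    ∀ n, N ≤ n → r n ≤ r N / C ^ N * C ^ n := by
  intro n hn
  induction n, hn using Nat.le_induction with
  | base => rw [div_mul_cancel₀ _ (by positivity : (C : ℝ) ^ N ≠ 0)]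
  | succ n hn ih =>
      calc r (n + 1) ≤ C * r n := h n hn
        _ ≤ C * (r N / C ^ N * C ^ n) := by
            exact mul_le_mul_of_nonneg_left ih hC.le
        _ = r N / C ^ N * C ^ (n + 1) := by ring

private lemma geom_lower (r : ℕ → ℝ) (C : ℝ) (hC : 0 < C) (N : ℕ)
    (h : ∀ n, N ≤ n → C * r n ≤ r (n + 1)) :
    ∀ n, N ≤ n → r N / C ^ N * C ^ n ≤ r n := by
  intro n hn
  induction n, hn using Nat.le_induction with
  | base => rw [div_mul_cancel₀ _ (by positivity : (C : ℝ) ^ N ≠ 0)]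
  | succ n hn ih =>
      calc r N / C ^ N * C ^ (n + 1) = C * (r N / C ^ N * C ^ n) := by ring
        _ ≤ C * r n := mul_le_mul_of_nonneg_left ih hC.le
        _ ≤ r (n + 1) := h n hn

private lemma pow_rpow_inv (M : ℝ) (hM : 0 ≤ M) {n : ℕ} (hn : 1 ≤ n) :
    (M ^ n) ^ ((n : ℝ)⁻¹) = M := by
  rw [← Real.rpow_natCast M n, ← Real.rpow_mul hM,
    mul_inv_cancel₀ (by exact_mod_cast Nat.one_le_iff_ne_zero.1 hn), Real.rpow_one]

/-- For positive `s n`: if `s (n+1) / s n → +∞` then `s n ^ (1/n) → +∞`; and if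
`limsup s n * s (n+2) / s (n+1)² < ∞` (i.e. the sequence is eventually bounded above), then the
sequence `t n = (s (n+1) / s n) ^ (1/n)` is bounded. -/
theorem ratio_criteria
    (s : ℕ → ℝ) (hs : ∀ n, 0 < s n) :
    ((Tendsto (fun n : ℕ => s (n + 1) / s n) atTop atTop) →
      Tendsto (fun n : ℕ => s n ^ ((n : ℝ)⁻¹)) atTop atTop) ∧
    ((∃ C : ℝ, ∀ᶠ n : ℕ in atTop, s n * s (n + 2) / (s (n + 1)) ^ 2 ≤ C) →
      ∃ M : ℝ, ∀ n : ℕ, (s (n + 1) / s n) ^ ((n : ℝ)⁻¹) ≤ M) := by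
  constructor
  · intro hrat
    rw [tendsto_atTop]
    intro b
    set M : ℝ := max b 0 + 1 with hMdef
    have hM : 0 < M := by positivity
    have hbM : b < M := by rw [hMdef]; linarith [le_max_left b (0:ℝ)]
    obtain ⟨N, hN⟩ := eventually_atTop.1 (hrat.eventually_ge_atTop M)
    have hstep : ∀ n, N ≤ n → M * s n ≤ s (n + 1) := fun n hn =>
      (le_div_iff₀ (hs n)).1 (hN n hn)
    set c : ℝ := s N / M ^ N with hcdef
    have hc : 0 < c := by have := hs N; positivity
    have hlow : ∀ n, N ≤ n → c * M ^ n ≤ s n := geom_lower s M hM N hstep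
    -- c ^ (1/n) → 1
    have h1 : Tendsto (fun n : ℕ => c ^ ((n : ℝ)⁻¹)) atTop (𝓝 1) := by
      have hinv : Tendsto (fun n : ℕ => ((n : ℝ))⁻¹) atTop (𝓝 0) :=
        tendsto_inv_atTop_zero.comp tendsto_natCast_atTop_atTop
      have hcont : Tendsto (fun x : ℝ => c ^ x) (𝓝 0) (𝓝 (c ^ (0 : ℝ))) :=
        (Real.continuousAt_const_rpow hc.ne').tendsto
      simpa [Real.rpow_zero, Function.comp_def] using hcont.comp hinv
    have hev : ∀ᶠ n : ℕ in atTop, b / M < c ^ ((n : ℝ)⁻¹) :=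
      h1.eventually (eventually_gt_nhds (by
        rw [div_lt_one hM]; exact hbM))
    rw [eventually_atTop] at hev
    obtain ⟨N₁, hN₁⟩ := hev
    rw [eventually_atTop]
    refine ⟨max (max N N₁) 1, fun n hn => ?_⟩
    have hnN : N ≤ n := le_trans (le_max_left _ _) (le_trans (le_max_left _ _) hn)
    have hnN₁ : N₁ ≤ n := le_trans (le_max_right _ _) (le_trans (le_max_left _ _) hn)
    have hn1 : 1 ≤ n := le_trans (le_max_right _ _) hn
    have h2 : (c * M ^ n) ^ ((n : ℝ)⁻¹) ≤ s n ^ ((n : ℝ)⁻¹) :=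
      Real.rpow_le_rpow (by positivity) (hlow n hnN) (by positivity)
    have h3 : (c * M ^ n) ^ ((n : ℝ)⁻¹) = c ^ ((n : ℝ)⁻¹) * M := by
      rw [Real.mul_rpow hc.le (by positivity), pow_rpow_inv M hM.le hn1]
    have h4 : b ≤ c ^ ((n : ℝ)⁻¹) * M := by
      have := (hN₁ n hnN₁).le
      calc b = b / M * M := by field_simp
        _ ≤ c ^ ((n : ℝ)⁻¹) * M := mul_le_mul_of_nonneg_right this hM.le
    calc b ≤ c ^ ((n : ℝ)⁻¹) * M := h4
      _ = (c * M ^ n) ^ ((n : ℝ)⁻¹) := h3.symm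
      _ ≤ s n ^ ((n : ℝ)⁻¹) := h2
  · rintro ⟨C, hC⟩
    obtain ⟨N, hN⟩ := eventually_atTop.1 hC
    have hC0 : 0 < C :=
      lt_of_lt_of_le (by have := hs N; have := hs (N + 1); have := hs (N + 2); positivity)
        (hN N le_rfl)
    set r : ℕ → ℝ := fun n => s (n + 1) / s n with hrdef
    have hr : ∀ n, 0 < r n := fun n => div_pos (hs (n + 1)) (hs n)
    have hstep : ∀ n, N ≤ n → r (n + 1) ≤ C * r n := by
      intro n hn
      have key : s n * s (n + 2) ≤ C * s (n + 1) ^ 2 :=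
        (div_le_iff₀ (by have := hs (n + 1); positivity)).1 (hN n hn)
      show s (n + 2) / s (n + 1) ≤ C * (s (n + 1) / s n)
      rw [mul_div_assoc', div_le_div_iff₀ (hs (n + 1)) (hs n)]
      nlinarith [hs n, hs (n + 1), hs (n + 2)]
    set A : ℝ := r N / C ^ N with hAdef
    have hA : 0 < A := by have := hr N; positivity
    have hup : ∀ n, N ≤ n → r n ≤ A * C ^ n := geom_upper r C hC0 N hstep
    have hbdd : ∀ᶠ n : ℕ in atTop, (s (n + 1) / s n) ^ ((n : ℝ)⁻¹) ≤ max A 1 * C := by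
      rw [eventually_atTop]
      refine ⟨max N 1, fun n hn => ?_⟩
      have hnN : N ≤ n := le_trans (le_max_left _ _) hn
      have hn1 : 1 ≤ n := le_trans (le_max_right _ _) hn
      have h2 : (r n) ^ ((n : ℝ)⁻¹) ≤ (A * C ^ n) ^ ((n : ℝ)⁻¹) :=
        Real.rpow_le_rpow (hr n).le (hup n hnN) (by positivity)
      have h3 : (A * C ^ n) ^ ((n : ℝ)⁻¹) = A ^ ((n : ℝ)⁻¹) * C := by
        rw [Real.mul_rpow hA.le (by positivity), pow_rpow_inv C hC0.le hn1]
      have h5 : A ^ ((n : ℝ)⁻¹) ≤ max A 1 := by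
        rcases le_total A 1 with h | h
        · exact le_trans (Real.rpow_le_one hA.le h (by positivity)) (le_max_right _ _)
        · refine le_trans ?_ (le_max_left _ _)
          calc A ^ ((n : ℝ)⁻¹) ≤ A ^ (1 : ℝ) :=
                Real.rpow_le_rpow_of_exponent_le h (by
                  rw [inv_le_one_iff₀]; right; exact_mod_cast hn1)
            _ = A := Real.rpow_one A
      calc (s (n + 1) / s n) ^ ((n : ℝ)⁻¹) = (r n) ^ ((n : ℝ)⁻¹) := rfl
        _ ≤ (A * C ^ n) ^ ((n : ℝ)⁻¹) := h2
        _ = A ^ ((n : ℝ)⁻¹) * C := h3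
        _ ≤ max A 1 * C := mul_le_mul_of_nonneg_right h5 hC0.le
    have : BddAbove (Set.range fun n : ℕ => (s (n + 1) / s n) ^ ((n : ℝ)⁻¹)) :=
      Filter.IsBoundedUnder.bddAbove_range ⟨max A 1 * C, hbdd⟩
    obtain ⟨M, hM⟩ := this
    exact ⟨M, fun n => hM (Set.mem_range_self n)⟩
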